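/- arXiv:2103.00758 — 2 statements merged into one kernel-verified Lean document; each statement's English description precedes it below -/
import Mathlib

section
/- Let n, t, P be positive integers with 2 ≤ t ≤ √n, n ≥ 4 and 6P ≤ n. With the block decomposition of length-n binary words into L = ⌊n/(3P)⌋ blocks (the first L-1 blocks of length 3P and the last of length 3P + s where n = 3LP + s, 0 ≤ s ≤ 3P-1), for every 1 ≤ l ≤ L-1 the number of patterns in T(l) satisfies #T(l) ≤ (36·P²·t²/n²)·#E_n(t). -/
/-- The three kinds of deletable errors: deletion, erasure, substitution (flip). -/
inductive ErrKind : Type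
  | D
  | E
  | F
  deriving DecidableEq

instance : Fintype ErrKind :=
  ⟨{ErrKind.D, ErrKind.E, ErrKind.F}, fun x => by cases x <;> simp⟩

/-- A binary word of length `n`. -/
abbrev Word (n : ℕ) := Fin n → Bool

/-- A deletable error pattern of length `n`: a pair `(e, v)`. -/
abbrev Pattern (n : ℕ) := (Fin n → Bool) × (Fin n → ErrKind)

/-- Process a list of (bit, error indicator, error kind) triples in order,
producing the corrupted string over `{0, 1, ε}` (`none` is the erasure symbol). -/
def corruptAux : List (Bool × Bool × ErrKind) → List (Option Bool)
  | [] => []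
  | (xi, false, _) :: rest => some xi :: corruptAux rest
  | (_, true, ErrKind.D) :: rest => corruptAux rest
  | (_, true, ErrKind.E) :: rest => none :: corruptAux rest
  | (xi, true, ErrKind.F) :: rest => some (!xi) :: corruptAux rest

/-- The corruption `F_g(x)` of the word `x` by the pattern `g`. -/
def corrupt {n : ℕ} (g : Pattern n) (x : Word n) : List (Option Bool) :=
  corruptAux (List.ofFn fun i => (x i, g.1 i, g.2 i))

/-- The corruption `F_g(x, t)` of the first `t` bits of `x` by the first `t` entries of `g`. -/
def corruptPrefix {n : ℕ} (g : Pattern n) (x : Word n) (t : ℕ) : List (Option Bool) :=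
  corruptAux ((List.ofFn fun i => (x i, g.1 i, g.2 i)).take t)

/-- The number of errors `Σ_i e_i` of a pattern. -/
def errCount {n : ℕ} (g : Pattern n) : ℕ :=
  (Finset.univ.filter fun i => g.1 i = true).card

/-- `E_n(r)`: the set of `n`-length deletable error patterns with at most `r` errors. -/
def Epat (n r : ℕ) : Finset (Pattern n) :=
  Finset.univ.filter fun g => errCount g ≤ r

/-- A pattern is `P`-far if any two distinct error positions are at distance at least `P`. -/
def IsPFar {n : ℕ} (P : ℕ) (g : Pattern n) : Prop :=
  ∀ i j : Fin n, i ≠ j → g.1 i = true → g.1 j = true →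
    (P : ℤ) ≤ |((i : ℕ) : ℤ) - ((j : ℕ) : ℤ)|

/-- The code `C` corrects all error patterns in `F`. -/
def CorrectsIn {n : ℕ} (C : Finset (Word n)) (F : Set (Pattern n)) : Prop :=
  ∀ x₁ ∈ C, ∀ x₂ ∈ C, x₁ ≠ x₂ → ∀ g₁ ∈ F, ∀ g₂ ∈ F, corrupt g₁ x₁ ≠ corrupt g₂ x₂

/-- The code `C` corrects all error patterns in `F` in real-time with delay at most `d`. -/
def CorrectsRealTime {n : ℕ} (C : Finset (Word n)) (F : Set (Pattern n)) (d : ℕ) : Prop :=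
  ∀ z : ℕ, 1 ≤ z → z ≤ n - d → ∀ x₁ ∈ C, ∀ x₂ ∈ C, x₁ ≠ x₂ →
    ∀ g₁ ∈ F, ∀ g₂ ∈ F, corruptPrefix g₁ x₁ (z + d) ≠ corruptPrefix g₂ x₂ (z + d)

/-- The redundancy `R(C) = n - log₂ #C` of an `n`-length code `C`. -/
noncomputable def redundancy {n : ℕ} (C : Finset (Word n)) : ℝ :=
  (n : ℝ) - Real.logb 2 (C.card)

/-- The number of nonzero entries of `e` in the `l`-th block (`1 ≤ l ≤ L`) of the decomposition
of `{0,1}^n` into `L` blocks, where blocks `1, …, L-1` have length `3P` and the last block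
extends to position `n`. -/
def blockCount (n P L l : ℕ) (e : Fin n → Bool) : ℕ :=
  (Finset.univ.filter fun i : Fin n =>
    e i = true ∧ 3 * P * (l - 1) ≤ (i : ℕ) ∧ (l = L ∨ (i : ℕ) < 3 * P * l)).card

-- AUX
open Finset

abbrev bp (n P L l : ℕ) (i : Fin n) : Prop :=
  3 * P * (l - 1) ≤ (i : ℕ) ∧ (l = L ∨ (i : ℕ) < 3 * P * l)

lemma blockCount_def (n P L l : ℕ) (e : Fin n → Bool) :
    blockCount n P L l e = (Finset.univ.filter fun i : Fin n => e i = true ∧ bp n P L l i).card :=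
  rfl

lemma single_mem_iff {n : ℕ} {p : Fin n → Prop} [DecidablePred p] {e : Fin n → Bool} {a : Fin n}
    (h : Finset.univ.filter (fun i => e i = true ∧ p i) = {a}) :
    ∀ k, p k → (e k = true ↔ k = a) := by
  intro k hk
  constructor
  · intro hkt
    have : k ∈ ({a} : Finset (Fin n)) := by
      rw [← h]; exact Finset.mem_filter.2 ⟨Finset.mem_univ _, hkt, hk⟩
    simpa using this
  · rintro rfl
    have : k ∈ Finset.univ.filter (fun i => e i = true ∧ p i) := by
      rw [h]; exact Finset.mem_singleton_self k
    exact (Finset.mem_filter.1 this).2.1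

lemma single_mem {n : ℕ} {p : Fin n → Prop} [DecidablePred p] {e : Fin n → Bool} {a : Fin n}
    (h : Finset.univ.filter (fun i => e i = true ∧ p i) = {a}) :
    e a = true ∧ p a := by
  have : a ∈ Finset.univ.filter (fun i => e i = true ∧ p i) := by
    rw [h]; exact Finset.mem_singleton_self a
  exact (Finset.mem_filter.1 this).2

def fmap (n P L l : ℕ) (g : Pattern n) : ℕ × ℕ × Pattern n :=
  ((Finset.univ.filter fun i : Fin n => g.1 i = true ∧ bp n P L l i).sup (fun i => (i : ℕ)),
   ((Finset.univ.filter fun i : Fin n => g.1 i = true ∧ bp n P L (l + 1) i).sup (fun i => (i : ℕ)),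
    ((fun i : Fin n => if bp n P L l i ∨ bp n P L (l + 1) i then false else g.1 i), g.2)))

def errSet {n : ℕ} (g : Pattern n) : Finset (Fin n) :=
  Finset.univ.filter fun i => g.1 i = true

lemma errCount_eq {n : ℕ} (g : Pattern n) : errCount g = (errSet g).card := rfl

lemma mem_errSet {n : ℕ} {g : Pattern n} {i : Fin n} : i ∈ errSet g ↔ g.1 i = true := by
  rw [errSet, Finset.mem_filter]
  simp only [Finset.mem_univ, true_and]

lemma mem_Epat {n r : ℕ} {g : Pattern n} : g ∈ Epat n r ↔ errCount g ≤ r := by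
  rw [Epat, Finset.mem_filter]
  simp only [Finset.mem_univ, true_and]

lemma errSet_update_true {n : ℕ} (e : Fin n → Bool) (v : Fin n → ErrKind) (i : Fin n) :
    errSet (Function.update e i true, v) = insert i (errSet (e, v)) := by
  ext k
  by_cases hk : k = i <;> simp [mem_errSet, Function.update_apply, hk]

lemma offDiag_card_eq {α : Type*} [DecidableEq α] (s : Finset α) :
    s.offDiag.card = s.card * (s.card - 1) := by
  rw [Finset.offDiag_card, Nat.mul_sub_one]

lemma ratio_lemma (n t : ℕ) (ht : 2 ≤ t) (htn : t ≤ n) :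
    ((n - t) + 2) * ((n - t) + 1) * (Epat n (t - 2)).card ≤ t * t * (Epat n t).card := by
  classical
  set R := (Epat n (t - 2)).sigma (fun g => (errSet g)ᶜ.offDiag) with hRdef
  set Q := (Epat n t).sigma (fun g => (errSet g).offDiag) with hQdef
  have hRQ : R.card ≤ Q.card := by
    apply Finset.card_le_card_of_injOn
      (fun x => ⟨(Function.update (Function.update x.1.1 x.2.1 true) x.2.2 true, x.1.2), x.2⟩)
    · rintro ⟨g, i, j⟩ hx
      simp only [Finset.mem_coe, hRdef, Finset.mem_sigma] at hx
      obtain ⟨hg, hij⟩ := hx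
      dsimp only at hg hij ⊢
      rw [Finset.mem_offDiag] at hij
      obtain ⟨hi, hj, hne⟩ := hij
      simp only [Finset.mem_compl, mem_errSet] at hi hj
      rw [Finset.mem_coe, hQdef, Finset.mem_sigma]
      have hES : errSet ((Function.update (Function.update g.1 i true) j true, g.2) : Pattern n)
          = insert j (insert i (errSet g)) := by
        rw [errSet_update_true]
        congr 1
        exact errSet_update_true g.1 g.2 i
      constructor
      · rw [mem_Epat, errCount_eq, hES]
        have hc : (errSet g).card ≤ t - 2 := by
          have := mem_Epat.1 hg
          rwa [errCount_eq] at this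
        calc (insert j (insert i (errSet g))).card ≤ (insert i (errSet g)).card + 1 :=
              Finset.card_insert_le _ _
          _ ≤ (errSet g).card + 1 + 1 :=
              Nat.add_le_add_right (Finset.card_insert_le _ _) 1
          _ ≤ t := by omega
      · rw [Finset.mem_offDiag]
        refine ⟨?_, ?_, hne⟩
        · rw [hES]; exact Finset.mem_insert_of_mem (Finset.mem_insert_self _ _)
        · rw [hES]; exact Finset.mem_insert_self _ _
    · rintro ⟨g, i, j⟩ hx ⟨g', i', j'⟩ hy hxy
      simp only [Finset.mem_coe, hRdef, Finset.mem_sigma] at hx hy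
      obtain ⟨hg, hij⟩ := hx
      obtain ⟨hg', hij'⟩ := hy
      dsimp only at hg hij hg' hij' hxy
      rw [Finset.mem_offDiag] at hij hij'
      simp only [Finset.mem_compl, mem_errSet] at hij hij'
      have h1 := congrArg Sigma.fst hxy
      have h2 := heq_iff_eq.1 (Sigma.ext_iff.1 hxy).2
      dsimp only at h1 h2
      obtain ⟨rfl, rfl⟩ : i = i' ∧ j = j' := Prod.ext_iff.1 h2
      have he : g.1 = g'.1 := by
        funext k
        by_cases hki : k = i
        · subst hki
          have ha : g.1 k ≠ true := by simpa using hij.1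
          have hb : g'.1 k ≠ true := by simpa using hij'.1
          simp only [Bool.not_eq_true] at ha hb
          rw [ha, hb]
        · by_cases hkj : k = j
          · subst hkj
            have ha : g.1 k ≠ true := by simpa using hij.2.1
            have hb : g'.1 k ≠ true := by simpa using hij'.2.1
            simp only [Bool.not_eq_true] at ha hb
            rw [ha, hb]
          · have := congrFun (congrArg (fun p => p.1) (congrArg Sigma.fst hxy)) k
            simpa [Function.update_apply, hki, hkj] using this
      have hv : g.2 = g'.2 := congrArg (fun p => (Sigma.fst p).2) hxy
      have hgg : g = g' := Prod.ext he hv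
      subst hgg
      rfl
  have hRlow : ((n - t) + 2) * ((n - t) + 1) * (Epat n (t - 2)).card ≤ R.card := by
    rw [hRdef, Finset.card_sigma, mul_comm]
    have := Finset.card_nsmul_le_sum (Epat n (t - 2))
      (fun g => ((errSet g)ᶜ.offDiag).card) (((n - t) + 2) * ((n - t) + 1)) ?_
    · simpa [smul_eq_mul] using this
    · intro g hg
      rw [offDiag_card_eq, Finset.card_compl]
      have hc : errCount g ≤ t - 2 := mem_Epat.1 hg
      rw [errCount_eq] at hc
      have hcard : (Fintype.card (Fin n)) = n := Fintype.card_fin n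
      have hm : (n - t) + 2 ≤ Fintype.card (Fin n) - (errSet g).card := by omega
      exact Nat.mul_le_mul hm (by omega)
  have hQhigh : Q.card ≤ t * t * (Epat n t).card := by
    rw [hQdef, Finset.card_sigma]
    have := Finset.sum_le_card_nsmul (Epat n t)
      (fun g => ((errSet g).offDiag).card) (t * t) ?_
    · calc ∑ g ∈ Epat n t, ((errSet g).offDiag).card ≤ (Epat n t).card • (t * t) := this
        _ = t * t * (Epat n t).card := by rw [smul_eq_mul, mul_comm]
    · intro g hg
      rw [offDiag_card_eq]
      have hc : errCount g ≤ t := mem_Epat.1 hg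
      rw [errCount_eq] at hc
      exact Nat.mul_le_mul hc (by omega)
  omega

set_option maxHeartbeats 2000000 in
/-- Bound on the number of patterns whose blocks `l` and `l+1` each contain exactly one
error. -/
theorem stmt14 (n t P : ℕ) (hn : 4 ≤ n) (ht : 2 ≤ t) (htn : (t : ℝ) ≤ Real.sqrt n)
    (hP : 0 < P) (h6P : 6 * P ≤ n)
    (l : ℕ) (hl1 : 1 ≤ l) (hl2 : l ≤ n / (3 * P) - 1) :
    (({g : Pattern n | g ∈ Epat n t ∧ blockCount n P (n / (3 * P)) l g.1 = 1 ∧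
        blockCount n P (n / (3 * P)) (l + 1) g.1 = 1}).ncard : ℝ) ≤
      (36 * (P : ℝ) ^ 2 * t ^ 2 / n ^ 2) * ((Epat n t).card : ℝ) := by
  classical
  have h3P : 0 < 3 * P := by omega
  set L := n / (3 * P) with hLdef
  have hL2 : 2 ≤ L := by
    rw [hLdef, Nat.le_div_iff_mul_le h3P]; omega
  have hlL : l < L := by omega
  have hmod : 3 * P * L + n % (3 * P) = n := Nat.div_add_mod n (3 * P)
  have hs : n % (3 * P) < 3 * P := Nat.mod_lt _ h3P
  have hQn : t * t ≤ n := by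
    have h0 : (0 : ℝ) ≤ (t : ℝ) := by positivity
    have h1 : ((t : ℝ)) ^ 2 ≤ (n : ℝ) := (Real.le_sqrt h0 (by positivity)).mp htn
    have h2 : ((t * t : ℕ) : ℝ) ≤ ((n : ℕ) : ℝ) := by push_cast; nlinarith
    exact_mod_cast h2
  have htle : t ≤ n := le_trans (Nat.le_mul_of_pos_left t (by omega)) hQn
  set Tf : Finset (Pattern n) := (Epat n t).filter
    (fun g => blockCount n P L l g.1 = 1 ∧ blockCount n P L (l + 1) g.1 = 1) with hTfdef
  have hset : {g : Pattern n | g ∈ Epat n t ∧ blockCount n P L l g.1 = 1 ∧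
      blockCount n P L (l + 1) g.1 = 1} = ↑Tf := by
    ext g
    simp only [hTfdef, Finset.coe_filter, Set.mem_setOf_eq, Finset.mem_filter]
  rw [hset, Set.ncard_coe_finset]
  -- the injection
  have hl1sub : l + 1 - 1 = l := rfl
  have hnotboth : ∀ k : Fin n, bp n P L l k → bp n P L (l + 1) k → False := by
    intro k hk1 hk2
    have h3 : (k : ℕ) < 3 * P * l := hk1.2.resolve_left (by omega)
    have h4 : 3 * P * l ≤ (k : ℕ) := by
      have := hk2.1; rwa [hl1sub] at this
    omega
  have hTcard : Tf.card ≤ 3 * P * (6 * P * (Epat n (t - 2)).card) := by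
    have hmain : Tf.card ≤ ((Finset.Ico (3 * P * (l - 1)) (3 * P * l)) ×ˢ
        ((Finset.Ico (3 * P * l) (3 * P * l + 6 * P)) ×ˢ (Epat n (t - 2)))).card := by
      apply Finset.card_le_card_of_injOn (fmap n P L l)
      · intro g hg
        simp only [Finset.mem_coe, hTfdef, Finset.mem_filter] at hg
        rw [blockCount_def, blockCount_def] at hg
        obtain ⟨hgE, hbI, hbJ⟩ := hg
        obtain ⟨a, ha⟩ := Finset.card_eq_one.1 hbI
        obtain ⟨b, hb⟩ := Finset.card_eq_one.1 hbJ
        have hpa : g.1 a = true ∧ bp n P L l a := single_mem ha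
        have hpb : g.1 b = true ∧ bp n P L (l + 1) b := single_mem hb
        have hfm : fmap n P L l g = ((a : ℕ), ((b : ℕ),
            ((fun i : Fin n => if bp n P L l i ∨ bp n P L (l + 1) i then false else g.1 i),
              g.2))) := by
          rw [fmap, ha, hb, Finset.sup_singleton, Finset.sup_singleton]
        rw [Finset.mem_coe, hfm, Finset.mem_product, Finset.mem_product]
        refine ⟨?_, ?_, ?_⟩
        · rw [Finset.mem_Ico]
          exact ⟨hpa.2.1, hpa.2.2.resolve_left (by omega)⟩
        · show (b : ℕ) ∈ Finset.Ico (3 * P * l) (3 * P * l + 6 * P)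
          rw [Finset.mem_Ico]
          constructor
          · have := hpb.2.1
            rwa [hl1sub] at this
          · rcases hpb.2.2 with hcase | hcase
            · have h1 : 3 * P * L = 3 * P * l + 3 * P := by rw [← hcase]; ring
              have h2 := b.isLt
              omega
            · have h1 : 3 * P * (l + 1) = 3 * P * l + 3 * P := by ring
              omega
        · show ((fun i : Fin n => if bp n P L l i ∨ bp n P L (l + 1) i then false else g.1 i,
              g.2) : Pattern n) ∈ Epat n (t - 2)
          rw [mem_Epat, errCount_eq]
          have hsd : errSet (((fun i : Fin n =>
                if bp n P L l i ∨ bp n P L (l + 1) i then false else g.1 i), g.2) : Pattern n)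
              = errSet g \
                ((Finset.univ.filter fun i : Fin n => g.1 i = true ∧ bp n P L l i) ∪
                 (Finset.univ.filter fun i : Fin n => g.1 i = true ∧ bp n P L (l + 1) i)) := by
            ext k
            simp only [mem_errSet, errSet, Finset.mem_sdiff, Finset.mem_union,
              Finset.mem_filter, Finset.mem_univ, true_and]
            by_cases hk1 : bp n P L l k
            · have hk2 : ¬ bp n P L (l + 1) k := fun h => hnotboth k hk1 h
              simp [hk1, hk2]
            · by_cases hk2 : bp n P L (l + 1) k <;> simp [hk1, hk2] <;> tauto
          rw [hsd]
          have hsub : ((Finset.univ.filter fun i : Fin n => g.1 i = true ∧ bp n P L l i) ∪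
              (Finset.univ.filter fun i : Fin n => g.1 i = true ∧ bp n P L (l + 1) i))
              ⊆ errSet g := by
            intro k hk
            rcases Finset.mem_union.1 hk with h | h <;>
              exact mem_errSet.2 (Finset.mem_filter.1 h).2.1
          rw [Finset.card_sdiff_of_subset hsub]
          have hdisj : Disjoint
              (Finset.univ.filter fun i : Fin n => g.1 i = true ∧ bp n P L l i)
              (Finset.univ.filter fun i : Fin n => g.1 i = true ∧ bp n P L (l + 1) i) := by
            rw [Finset.disjoint_left]
            intro k hkI hkJ
            exact hnotboth k (Finset.mem_filter.1 hkI).2.2 (Finset.mem_filter.1 hkJ).2.2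
          rw [Finset.card_union_of_disjoint hdisj, ha, hb]
          have hgE' : (errSet g).card ≤ t := by
            have := mem_Epat.1 hgE; rwa [errCount_eq] at this
          simp only [Finset.card_singleton]
          omega
      · intro g hgm g' hgm' heq
        simp only [Finset.mem_coe, hTfdef, Finset.mem_filter] at hgm hgm'
        rw [blockCount_def, blockCount_def] at hgm hgm'
        obtain ⟨hgE, hbI, hbJ⟩ := hgm
        obtain ⟨hgE', hbI', hbJ'⟩ := hgm'
        obtain ⟨a, ha⟩ := Finset.card_eq_one.1 hbI
        obtain ⟨b, hb⟩ := Finset.card_eq_one.1 hbJ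
        obtain ⟨a', ha'⟩ := Finset.card_eq_one.1 hbI'
        obtain ⟨b', hb'⟩ := Finset.card_eq_one.1 hbJ'
        have hfm : fmap n P L l g = ((a : ℕ), ((b : ℕ),
            ((fun i : Fin n => if bp n P L l i ∨ bp n P L (l + 1) i then false else g.1 i),
              g.2))) := by
          rw [fmap, ha, hb, Finset.sup_singleton, Finset.sup_singleton]
        have hfm' : fmap n P L l g' = ((a' : ℕ), ((b' : ℕ),
            ((fun i : Fin n => if bp n P L l i ∨ bp n P L (l + 1) i then false else g'.1 i),
              g'.2))) := by
          rw [fmap, ha', hb', Finset.sup_singleton, Finset.sup_singleton]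
        rw [hfm, hfm', Prod.mk.injEq, Prod.mk.injEq, Prod.mk.injEq] at heq
        obtain ⟨h1, h2, hredf, hredv⟩ := heq
        have haa : a = a' := Fin.val_injective h1
        have hbb : b = b' := Fin.val_injective h2
        have he : g.1 = g'.1 := by
          funext k
          by_cases hk1 : bp n P L l k
          · rw [Bool.eq_iff_iff, single_mem_iff ha k hk1, single_mem_iff ha' k hk1, haa]
          · by_cases hk2 : bp n P L (l + 1) k
            · rw [Bool.eq_iff_iff, single_mem_iff hb k hk2, single_mem_iff hb' k hk2, hbb]
            · have := congrFun hredf k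
              simpa [hk1, hk2] using this
        exact Prod.ext he hredv
    calc Tf.card ≤ _ := hmain
      _ = 3 * P * (6 * P * (Epat n (t - 2)).card) := by
        rw [Finset.card_product, Finset.card_product, Nat.card_Ico, Nat.card_Ico]
        congr 2
        · obtain ⟨l', rfl⟩ : ∃ l', l = l' + 1 := ⟨l - 1, by omega⟩
          have h1 : 3 * P * (l' + 1) = 3 * P * l' + 3 * P := by ring
          rw [Nat.add_sub_cancel, h1]
          exact Nat.add_sub_cancel_left _ _
        · exact Nat.add_sub_cancel_left _ _
  -- ratio and arithmetic
  have hratio : ((n - t) + 2) * ((n - t) + 1) * (Epat n (t - 2)).card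
      ≤ t * t * (Epat n t).card := ratio_lemma n t ht htle
  have hA : n ^ 2 ≤ 2 * (((n - t) + 2) * ((n - t) + 1)) := by
    set A := n - t with hAdef
    have hnA : n = A + t := by omega
    rw [hnA]
    have h : t * t ≤ A + t := by omega
    zify at *
    nlinarith [sq_nonneg ((A : ℤ) - t * t + t),
      mul_nonneg (by linarith : (0 : ℤ) ≤ (A : ℤ) - t * t + t)
        (by positivity : (0 : ℤ) ≤ (t : ℤ)),
      mul_nonneg (by linarith : (0 : ℤ) ≤ (A : ℤ) - t * t + t)
        (by linarith : (0 : ℤ) ≤ (t : ℤ) - 2)]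
  have hNat : Tf.card * n ^ 2 ≤ 36 * (P * P) * (t * t * (Epat n t).card) := by
    calc Tf.card * n ^ 2
        ≤ (3 * P * (6 * P * (Epat n (t - 2)).card)) * (2 * (((n - t) + 2) * ((n - t) + 1))) :=
          Nat.mul_le_mul hTcard hA
      _ = 36 * (P * P) * (((n - t) + 2) * ((n - t) + 1) * (Epat n (t - 2)).card) := by ring
      _ ≤ 36 * (P * P) * (t * t * (Epat n t).card) := Nat.mul_le_mul_left _ hratio
  have hn2 : (0 : ℝ) < (n : ℝ) ^ 2 := by positivity
  rw [div_mul_eq_mul_div, le_div_iff₀ hn2]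
  calc (Tf.card : ℝ) * (n : ℝ) ^ 2 = ((Tf.card * n ^ 2 : ℕ) : ℝ) := by push_cast; ring
    _ ≤ ((36 * (P * P) * (t * t * (Epat n t).card) : ℕ) : ℝ) := by exact_mod_cast hNat
    _ = 36 * (P : ℝ) ^ 2 * (t : ℝ) ^ 2 * ((Epat n t).card : ℝ) := by push_cast; ring
end

section
/- Let n, t, P be positive integers with 2 ≤ t ≤ √n, n ≥ 4 and 6P ≤ n. Then the number of patterns (e,v) ∈ E_n(t) for which two consecutive blocks of e (among the L = ⌊n/(3P)⌋ blocks) each contain exactly one nonzero entry is at most (12·P·t²/n)·#E_n(t). -/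
section Stmt15Aux
open Finset

namespace S15
variable {n : ℕ}

theorem wt_card (n r : ℕ) :
    ((Finset.univ : Finset (Fin n → Bool)).filter
      fun e => (Finset.univ.filter fun i => e i = true).card ≤ r).card
      = ∑ k ∈ Finset.range (r+1), n.choose k := by
  have h : ((Finset.range (r+1)).biUnion
      fun k => Finset.powersetCard k (Finset.univ : Finset (Fin n))).card
      = ∑ k ∈ Finset.range (r+1), n.choose k := by
    rw [Finset.card_biUnion]
    · simp [Finset.card_powersetCard]
    · intro a _ b _ hab
      simp only [Finset.disjoint_left, Finset.mem_powersetCard]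
      rintro A ⟨-, rfl⟩ ⟨-, h⟩
      exact hab (by omega)
  rw [← h]
  apply Finset.card_nbij' (fun e => Finset.univ.filter fun i => e i = true)
    (fun A p => decide (p ∈ A))
  · intro e he
    simp only [Finset.mem_coe, Finset.mem_filter, Finset.mem_univ, true_and] at he
    simp only [Finset.mem_coe, Finset.mem_biUnion, Finset.mem_range, Finset.mem_powersetCard]
    exact ⟨_, Nat.lt_succ_of_le he, Finset.subset_univ _, rfl⟩
  · intro A hA
    simp only [Finset.mem_coe, Finset.mem_biUnion, Finset.mem_range, Finset.mem_powersetCard] at hA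
    obtain ⟨k, hk, -, rfl⟩ := hA
    simp only [Finset.mem_coe, Finset.mem_filter, Finset.mem_univ, true_and]
    have : (Finset.univ.filter fun i => decide (i ∈ A) = true) = A := by
      ext p; simp
    rw [this]
    omega
  · intro e he
    funext p
    simp
  · intro A hA
    ext p; simp

theorem epat_card (n r : ℕ) :
    (Epat n r).card = (∑ k ∈ Finset.range (r+1), n.choose k) * 3 ^ n := by
  have h1 : Epat n r = ((Finset.univ : Finset (Fin n → Bool)).filter
      fun e => (Finset.univ.filter fun i => e i = true).card ≤ r) ×ˢ
      (Finset.univ : Finset (Fin n → ErrKind)) := by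
    ext ⟨e, v⟩
    simp only [Epat, errCount, Finset.mem_filter, Finset.mem_univ, true_and,
      Finset.mem_product, and_true]
    exact ⟨fun h => (Finset.mem_filter.1 h).2, fun h => Finset.mem_filter.2 ⟨Finset.mem_univ _, h⟩⟩
  rw [h1, Finset.card_product]
  congr 1
  · exact wt_card n r
  · rw [Finset.card_univ]
    simp [Fintype.card_fun]
    rfl

theorem binom_ineq (n t : ℕ) (ht : 2 ≤ t) (htn : t ≤ n) :
    (n - t + 1)^2 * ∑ k ∈ Finset.range (t-1), n.choose k
      ≤ t^2 * ∑ k ∈ Finset.range (t+1), n.choose k := by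
  have step1 : (n - t + 1)^2 * ∑ k ∈ Finset.range (t-1), n.choose k
      ≤ t^2 * ∑ k ∈ Finset.range (t-1), n.choose (k+2) := by
    rw [Finset.mul_sum, Finset.mul_sum]
    apply Finset.sum_le_sum
    intro k hk
    simp only [Finset.mem_range] at hk
    have h1 : n.choose (k+1) * (k+1) = n.choose k * (n - k) := Nat.choose_succ_right_eq n k
    have h2 : n.choose (k+2) * (k+2) = n.choose (k+1) * (n - (k+1)) :=
      Nat.choose_succ_right_eq n (k+1)
    have key : n.choose (k+2) * ((k+2)*(k+1)) = n.choose k * ((n-k) * (n-k-1)) := by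
      calc n.choose (k+2) * ((k+2)*(k+1)) = n.choose (k+1) * (n-(k+1)) * (k+1) := by
            rw [← h2]; ring
        _ = n.choose k * (n-k) * (n - (k+1)) := by rw [← h1]; ring
        _ = n.choose k * ((n-k) * (n-k-1)) := by
            have : n - (k+1) = n - k - 1 := by omega
            rw [this]; ring
    have hkk : (k+2)*(k+1) ≤ t^2 := by
      nlinarith [Nat.mul_le_mul (show k+2 ≤ t by omega) (show k+1 ≤ t by omega)]
    have hnn : (n-t+1)*(n-t+1) ≤ (n-k)*(n-k-1) := by
      apply Nat.mul_le_mul <;> omega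
    calc (n-t+1)^2 * n.choose k = n.choose k * ((n-t+1)*(n-t+1)) := by ring
      _ ≤ n.choose k * ((n-k)*(n-k-1)) := Nat.mul_le_mul_left _ hnn
      _ = n.choose (k+2) * ((k+2)*(k+1)) := key.symm
      _ ≤ n.choose (k+2) * t^2 := Nat.mul_le_mul_left _ hkk
      _ = t^2 * n.choose (k+2) := by ring
  have step2 : ∑ k ∈ Finset.range (t-1), n.choose (k+2)
      ≤ ∑ k ∈ Finset.range (t+1), n.choose k := by
    have : ∑ k ∈ Finset.range (t-1), n.choose (k+2)
        = ∑ k ∈ Finset.Ico 2 (t+1), n.choose k := by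
      rw [Finset.sum_Ico_eq_sum_range]
      have h21 : t + 1 - 2 = t - 1 := by omega
      rw [h21]
      exact Finset.sum_congr rfl fun k _ => by rw [Nat.add_comm 2 k]
    rw [this]
    apply Finset.sum_le_sum_of_subset
    intro k hk
    simp only [Finset.mem_Ico, Finset.mem_range] at *
    omega
  calc _ ≤ t^2 * ∑ k ∈ Finset.range (t-1), n.choose (k+2) := step1
    _ ≤ _ := Nat.mul_le_mul_left _ step2

def blk (n P L l : ℕ) (e : Fin n → Bool) : Finset (Fin n) :=
  Finset.univ.filter fun i : Fin n =>
    e i = true ∧ 3 * P * (l - 1) ≤ (i : ℕ) ∧ (l = L ∨ (i : ℕ) < 3 * P * l)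

def pred (n P L : ℕ) (g : Pattern n) (l : ℕ) : Prop :=
  1 ≤ l ∧ l ≤ L - 1 ∧ (blk n P L l g.1).card = 1 ∧ (blk n P L (l+1) g.1).card = 1

instance (P L : ℕ) (g : Pattern n) : DecidablePred (pred n P L g) := fun l => by
  unfold pred; infer_instance

noncomputable def f (n P L : ℕ) (g : Pattern n) : ℕ × ℕ × Pattern n := by
  classical
  exact if h : ∃ l, pred n P L g l then
    let l := Nat.find h
    let i := (blk n P L l g.1).min' (Finset.card_pos.mp (by
      rw [(Nat.find_spec h).2.2.1]; norm_num))
    let j := (blk n P L (l+1) g.1).min' (Finset.card_pos.mp (by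
      rw [(Nat.find_spec h).2.2.2]; norm_num))
    ((i : ℕ), (j : ℕ) - 3*P*l, ((fun p => if p = i ∨ p = j then false else g.1 p), g.2))
  else (0, 0, g)

theorem f_spec (P L : ℕ) (g : Pattern n) (h : ∃ l, pred n P L g l) (hL : 2 ≤ L) :
    ∃ (l : ℕ) (i j : Fin n),
      f n P L g = ((i : ℕ), (j : ℕ) - 3*P*l,
        ((fun p => if p = i ∨ p = j then false else g.1 p), g.2)) ∧
      1 ≤ l ∧ l + 1 ≤ L ∧
      g.1 i = true ∧ g.1 j = true ∧
      3*P*(l-1) ≤ (i:ℕ) ∧ (i:ℕ) < 3*P*l ∧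
      3*P*l ≤ (j:ℕ) ∧ (l+1 = L ∨ (j:ℕ) < 3*P*(l+1)) := by
  classical
  set l := Nat.find h with hl
  have hp : pred n P L g l := Nat.find_spec h
  obtain ⟨hl1, hlL, hc1, hc2⟩ := hp
  have hne1 : (blk n P L l g.1).Nonempty := Finset.card_pos.mp (by rw [hc1]; norm_num)
  have hne2 : (blk n P L (l+1) g.1).Nonempty := Finset.card_pos.mp (by rw [hc2]; norm_num)
  refine ⟨l, (blk n P L l g.1).min' hne1, (blk n P L (l+1) g.1).min' hne2, ?_, hl1, by omega,
    ?_, ?_, ?_, ?_, ?_, ?_⟩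
  · rw [f, dif_pos h]
  all_goals {
    have hi := Finset.min'_mem _ hne1
    have hj := Finset.min'_mem _ hne2
    simp only [blk, Finset.mem_filter, Finset.mem_univ, true_and] at hi hj
    have hlneL : l ≠ L := by omega
    simp only [Nat.add_sub_cancel] at hj
    first
    | exact hi.1
    | exact hj.1
    | exact hi.2.1
    | exact hj.2.1
    | exact hj.2.2
    | { rcases hi.2.2 with h' | h'
        · exact absurd h' hlneL
        · exact h' } }

theorem f_inj (P L : ℕ) (hP : 0 < P) (hL : 2 ≤ L) (g₁ g₂ : Pattern n)
    (h₁ : ∃ l, pred n P L g₁ l) (h₂ : ∃ l, pred n P L g₂ l)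
    (he : f n P L g₁ = f n P L g₂) : g₁ = g₂ := by
  obtain ⟨l₁, i₁, j₁, hf₁, ha₁, hb₁, hgi₁, hgj₁, hii₁, hi₁, hj₁, hjj₁⟩ := f_spec P L g₁ h₁ hL
  obtain ⟨l₂, i₂, j₂, hf₂, ha₂, hb₂, hgi₂, hgj₂, hii₂, hi₂, hj₂, hjj₂⟩ := f_spec P L g₂ h₂ hL
  rw [hf₁, hf₂] at he
  obtain ⟨he1, he2, he3⟩ : _ ∧ _ ∧ _ := by
    simpa only [Prod.mk.injEq] using he
  have hi12 : i₁ = i₂ := Fin.ext he1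
  have hll : l₁ = l₂ := by
    rcases lt_trichotomy l₁ l₂ with hc | hc | hc
    · have hm : 3*P*l₁ ≤ 3*P*(l₂-1) := Nat.mul_le_mul_left _ (by omega)
      rw [hi12] at hi₁
      linarith
    · exact hc
    · have hm : 3*P*l₂ ≤ 3*P*(l₁-1) := Nat.mul_le_mul_left _ (by omega)
      rw [hi12] at hi₁
      linarith
  subst hll
  subst hi12
  have hj12 : j₁ = j₂ := by
    apply Fin.ext
    have e1 := Nat.sub_add_cancel hj₁
    have e2 := Nat.sub_add_cancel hj₂
    rw [← e1, ← e2, he2]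
  subst hj12
  obtain ⟨he31, he32⟩ : _ ∧ _ := by simpa only [Prod.mk.injEq] using he3
  apply Prod.ext _ he32
  funext p
  by_cases hp : p = i₁ ∨ p = j₁
  · rcases hp with rfl | rfl
    · rw [hgi₁, hgi₂]
    · rw [hgj₁, hgj₂]
  · have := congrFun he31 p
    simpa only [if_neg hp] using this

theorem f_maps (t P : ℕ) (hP : 0 < P) (h6P : 6*P ≤ n) (g : Pattern n)
    (hg : g ∈ Epat n t) (h : ∃ l, pred n P (n/(3*P)) g l) :
    f n P (n/(3*P)) g ∈
      (Finset.range n) ×ˢ (Finset.range (6*P)) ×ˢ (Epat n (t-2)) := by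
  have h3P : 0 < 3*P := by omega
  have hL : 2 ≤ n/(3*P) := by
    rw [Nat.le_div_iff_mul_le h3P]; omega
  obtain ⟨l, i, j, hf, ha, hb, hgi, hgj, hii, hi, hj, hjj⟩ := f_spec P (n/(3*P)) g h hL
  rw [hf]
  simp only [Finset.mem_product, Finset.mem_range]
  refine ⟨i.isLt, ?_, ?_⟩
  · rw [tsub_lt_iff_right hj]
    rcases hjj with hc | hc
    · have hd := Nat.div_add_mod n (3*P)
      have hm := Nat.mod_lt n h3P
      have hjn : (j:ℕ) < n := j.isLt
      rw [← hc] at hd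
      have hexp : 3*P*(l+1) = 3*P*l + 3*P := by ring
      linarith
    · have hexp : 3*P*(l+1) = 3*P*l + 3*P := by ring
      linarith
  · simp only [Epat, Finset.mem_filter, Finset.mem_univ, true_and] at hg ⊢
    have hij : i ≠ j := by
      intro hij
      rw [hij] at hi
      omega
    have hset : (Finset.univ.filter fun p : Fin n =>
        (if p = i ∨ p = j then false else g.1 p) = true)
        = (Finset.univ.filter fun p => g.1 p = true) \ {i, j} := by
      ext p
      by_cases hp : p = i ∨ p = j <;>
        · simp [hp, Finset.mem_sdiff]; tauto
    have hsub : ({i, j} : Finset (Fin n)) ⊆ Finset.univ.filter fun p => g.1 p = true := by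
      intro p hp
      simp only [Finset.mem_insert, Finset.mem_singleton] at hp
      rcases hp with rfl | rfl <;> simp [hgi, hgj]
    have hcard2 : ({i, j} : Finset (Fin n)).card = 2 := by
      rw [Finset.card_insert_of_notMem (by simp [hij]), Finset.card_singleton]
    show (Finset.univ.filter fun p : Fin n =>
        (if p = i ∨ p = j then false else g.1 p) = true).card ≤ t - 2
    rw [hset, Finset.card_sdiff_of_subset hsub, hcard2]
    exact Nat.sub_le_sub_right hg 2

open Classical in
theorem card_bound (t P : ℕ) (hP : 0 < P) (h6P : 6*P ≤ n) :
    ((Epat n t).filter fun g => ∃ l, pred n P (n/(3*P)) g l).card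
      ≤ n * (6*P * (Epat n (t-2)).card) := by
  have h3P : 0 < 3*P := by omega
  have hL : 2 ≤ n/(3*P) := by rw [Nat.le_div_iff_mul_le h3P]; omega
  have hmaps : ∀ g ∈ (Epat n t).filter fun g => ∃ l, pred n P (n/(3*P)) g l,
      f n P (n/(3*P)) g ∈ (Finset.range n) ×ˢ (Finset.range (6*P)) ×ˢ (Epat n (t-2)) := by
    intro g hg
    rw [Finset.mem_filter] at hg
    exact f_maps t P hP h6P g hg.1 hg.2
  have hinj : Set.InjOn (f n P (n/(3*P)))
      ↑((Epat n t).filter fun g => ∃ l, pred n P (n/(3*P)) g l) := by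
    intro g₁ hg₁ g₂ hg₂ he
    simp only [Finset.coe_filter, Set.mem_setOf_eq] at hg₁ hg₂
    exact f_inj P (n/(3*P)) hP hL g₁ g₂ hg₁.2 hg₂.2 he
  calc _ ≤ ((Finset.range n) ×ˢ (Finset.range (6*P)) ×ˢ (Epat n (t-2))).card :=
        Finset.card_le_card_of_injOn _ hmaps hinj
    _ = n * (6*P * (Epat n (t-2)).card) := by
        rw [Finset.card_product, Finset.card_product, Finset.card_range, Finset.card_range]

theorem final (n t P B E E' : ℕ) (hn : 4 ≤ n) (ht : 2 ≤ t) (htn : (t : ℝ) ≤ Real.sqrt n)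
    (hP : 0 < P) (htn' : t ≤ n)
    (hcb : B ≤ n * (6*P*E')) (hbin : (n - t + 1)^2 * E' ≤ t^2 * E) :
    (B : ℝ) ≤ (12 * (P:ℝ) * t^2 / n) * E := by
  have hn0 : (0:ℝ) < n := by positivity
  have hBr : (B:ℝ) ≤ (n:ℝ) * (6*(P:ℝ)*(E':ℝ)) := by exact_mod_cast hcb
  have hWr : ((n-t+1:ℕ):ℝ)^2 * (E':ℝ) ≤ (t:ℝ)^2 * (E:ℝ) := by exact_mod_cast hbin
  have hmr : ((n-t+1:ℕ):ℝ) = (n:ℝ) - (t:ℝ) + 1 := by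
    push_cast [htn']
    ring
  set x := Real.sqrt n with hxdef
  have hx2 : x^2 = n := Real.sq_sqrt hn0.le
  have hx0 : 0 ≤ x := Real.sqrt_nonneg n
  have htr : (t:ℝ) ≤ (n:ℝ) := by exact_mod_cast htn'
  have hmge : x^2 - x + 1 ≤ ((n-t+1:ℕ):ℝ) := by
    rw [hmr, hx2]
    linarith
  have hm0 : (0:ℝ) < ((n-t+1:ℕ):ℝ) := by rw [hmr]; linarith
  have hq0 : (0:ℝ) ≤ x^2 - x + 1 := by nlinarith [sq_nonneg (x-1)]
  have hqq : (x^2 - x + 1)^2 ≤ ((n-t+1:ℕ):ℝ)^2 := pow_le_pow_left₀ hq0 hmge 2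
  have hmain : (n:ℝ)^2 ≤ 2 * ((n-t+1:ℕ):ℝ)^2 := by
    nlinarith [hqq, sq_nonneg ((x-1)^2), hx2]
  have hstep : (n:ℝ)^2 * (E':ℝ) ≤ 2 * (t:ℝ)^2 * (E:ℝ) := by
    have a1 : (n:ℝ)^2 * (((n-t+1:ℕ):ℝ)^2 * (E':ℝ)) ≤ (n:ℝ)^2 * ((t:ℝ)^2 * (E:ℝ)) :=
      mul_le_mul_of_nonneg_left hWr (by positivity)
    have a2 : (n:ℝ)^2 * ((t:ℝ)^2 * (E:ℝ)) ≤ 2*((n-t+1:ℕ):ℝ)^2 * ((t:ℝ)^2 * (E:ℝ)) :=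
      mul_le_mul_of_nonneg_right hmain (by positivity)
    have a3 : (n:ℝ)^2 * (E':ℝ) * ((n-t+1:ℕ):ℝ)^2
        ≤ (2*(t:ℝ)^2*(E:ℝ)) * ((n-t+1:ℕ):ℝ)^2 := by nlinarith [a1, a2]
    exact le_of_mul_le_mul_right a3 (pow_pos hm0 2)
  rw [div_mul_eq_mul_div, le_div_iff₀ hn0]
  have hB2 : (B:ℝ) * n ≤ 6*(P:ℝ)*((n:ℝ)^2*(E':ℝ)) := by
    have := mul_le_mul_of_nonneg_right hBr hn0.le
    linarith [this]
  linarith [hB2, mul_le_mul_of_nonneg_left hstep (show (0:ℝ) ≤ 6*(P:ℝ) by positivity)]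

end S15
end Stmt15Aux


/-- Bound on the number of patterns for which two consecutive blocks each contain exactly
one error. -/
theorem stmt15 (n t P : ℕ) (hn : 4 ≤ n) (ht : 2 ≤ t) (htn : (t : ℝ) ≤ Real.sqrt n)
    (hP : 0 < P) (h6P : 6 * P ≤ n) :
    (({g : Pattern n | g ∈ Epat n t ∧
        ∃ l : ℕ, 1 ≤ l ∧ l ≤ n / (3 * P) - 1 ∧
          blockCount n P (n / (3 * P)) l g.1 = 1 ∧
          blockCount n P (n / (3 * P)) (l + 1) g.1 = 1}).ncard : ℝ) ≤
      (12 * (P : ℝ) * t ^ 2 / n) * ((Epat n t).card : ℝ) := by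
  classical
  have h3P : 0 < 3*P := by omega
  have hn0 : (0:ℝ) < n := by positivity
  have hsn : Real.sqrt n ≤ n := by
    have h1 := Real.sqrt_le_sqrt (show (n:ℝ) ≤ (n:ℝ)^2 by nlinarith [show (1:ℝ) ≤ (n:ℝ) by exact_mod_cast Nat.one_le_of_lt hn])
    rwa [Real.sqrt_sq hn0.le] at h1
  have htn' : t ≤ n := by exact_mod_cast htn.trans hsn
  have hseteq : {g : Pattern n | g ∈ Epat n t ∧ ∃ l : ℕ, 1 ≤ l ∧ l ≤ n/(3*P) - 1 ∧
      blockCount n P (n/(3*P)) l g.1 = 1 ∧ blockCount n P (n/(3*P)) (l+1) g.1 = 1}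
      = ↑((Epat n t).filter fun g => ∃ l, S15.pred n P (n/(3*P)) g l) := by
    ext g
    simp only [Set.mem_setOf_eq, Finset.coe_filter, Finset.mem_coe, Finset.mem_filter, S15.pred, S15.blk, blockCount]
    simp
  rw [hseteq, Set.ncard_coe_finset]
  have hcb := S15.card_bound (n := n) t P hP h6P
  have hbin : (n - t + 1)^2 * (Epat n (t-2)).card ≤ t^2 * (Epat n t).card := by
    rw [S15.epat_card n (t-2), S15.epat_card n t]
    have h21 : t - 2 + 1 = t - 1 := by omega
    rw [h21]
    calc (n-t+1)^2 * ((∑ k ∈ Finset.range (t-1), n.choose k) * 3^n)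
        = ((n-t+1)^2 * ∑ k ∈ Finset.range (t-1), n.choose k) * 3^n := by ring
      _ ≤ (t^2 * ∑ k ∈ Finset.range (t+1), n.choose k) * 3^n :=
          Nat.mul_le_mul_right _ (S15.binom_ineq n t ht htn')
      _ = t^2 * ((∑ k ∈ Finset.range (t+1), n.choose k) * 3^n) := by ring
  exact S15.final n t P _ _ _ hn ht htn hP htn' hcb hbin
end
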